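/- Assume the cofinite Δ⁰₂-Ramsey theorem: for every eventually constant g : [ℕ]^{<ω} → {0,1} there exists an infinite X ⊆ ℕ such that ḡ is constant on the collection of cofinite subsets of X. Then the three-element antichain is Δ⁰₂-bqo: for every eventually constant f : [ℕ]^{<ω} → {0,1,2} there exists an infinite X ⊆ ℕ with f̄(X) = f̄(X⁻), where X⁻ = X \ {min X}. -/

import Mathlib

/-- `seg X n` is the set of the `n` smallest elements of `X`. -/
noncomputable def seg (X : Set ℕ) (n : ℕ) : Finset ℕ :=
  (Finset.range n).image (Nat.nth (· ∈ X))

/-- `f` is eventually constant. -/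
def EvConst {Q : Type*} (f : Finset ℕ → Q) : Prop :=
  ∀ X : Set ℕ, X.Infinite → ∃ N, ∀ n > N, f (seg X n) = f (seg X N)

/-- `fbar` is the limit function of `f`. -/
def IsLimit {Q : Type*} (f : Finset ℕ → Q) (fbar : Set ℕ → Q) : Prop :=
  ∀ X : Set ℕ, X.Infinite → ∃ N, ∀ n ≥ N, f (seg X n) = fbar X

/-- `s` is a proper initial segment of `t`. -/
def PInitSeg (s t : Finset ℕ) : Prop :=
  s ⊆ t ∧ s.card < t.card ∧ ∀ x ∈ s, ∀ y ∈ t, y ∉ s → x < y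

/-- `X⁻ = X \ {min X}`. -/
def dropMin (X : Set ℕ) : Set ℕ := X \ {sInf X}

/-- `X^{-i}`: `X` without its `i` smallest elements. -/
def dropIter (i : ℕ) (X : Set ℕ) : Set ℕ := dropMin^[i] X

/-- `Z/s`: elements of `Z` above all elements of `s`. -/
def after (Z : Set ℕ) (s : Finset ℕ) : Set ℕ := {n ∈ Z | ∀ m ∈ s, m < n}

/-- `Y` is a cofinite subset of `X`. -/
def Cofin (Y X : Set ℕ) : Prop := Y ⊆ X ∧ (X \ Y).Finite

lemma mem_seg {X : Set ℕ} {n a : ℕ} :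
    a ∈ seg X n ↔ ∃ i < n, Nat.nth (· ∈ X) i = a := by
  simp [seg]

lemma seg_subset {X : Set ℕ} (hX : X.Infinite) (n : ℕ) : ↑(seg X n) ⊆ X := by
  intro a ha
  rw [Finset.mem_coe, mem_seg] at ha
  obtain ⟨i, -, rfl⟩ := ha
  exact Nat.nth_mem_of_infinite hX i

lemma card_seg {X : Set ℕ} (hX : X.Infinite) (n : ℕ) : (seg X n).card = n := by
  rw [seg]
  rw [Finset.card_image_of_injective _ (Nat.nth_injective (p := (· ∈ X)) hX), Finset.card_range]

open Classical in
lemma subset_seg {Z : Set ℕ} (hZ : Z.Infinite) {t : Finset ℕ}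
    (ht : ↑t ⊆ Z) (habove : ∀ z ∈ Z, z ∉ t → ∀ a ∈ t, a < z)
    {n : ℕ} (hn : t.card ≤ n) : t ⊆ seg Z n := by
  intro a ha
  have haZ : a ∈ Z := ht ha
  have hcount : Nat.count (· ∈ Z) a < t.card := by
    rw [Nat.count_eq_card_filter_range]
    refine lt_of_le_of_lt (Finset.card_le_card ?_) (Finset.card_erase_lt_of_mem ha)
    intro z hz
    simp only [Finset.mem_filter, Finset.mem_range] at hz
    obtain ⟨hz1, hz2⟩ := hz
    rw [Finset.mem_erase]
    by_cases hzt : z ∈ t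
    · exact ⟨by omega, hzt⟩
    · exact absurd (habove z hz2 hzt a ha) (by omega)
  rw [mem_seg]
  exact ⟨_, lt_of_lt_of_le hcount hn, Nat.nth_count haZ⟩

lemma seg_eq {Z : Set ℕ} (hZ : Z.Infinite) {t : Finset ℕ}
    (ht : ↑t ⊆ Z) (habove : ∀ z ∈ Z, z ∉ t → ∀ a ∈ t, a < z) :
    seg Z t.card = t :=
  (Finset.eq_of_subset_of_card_le (subset_seg hZ ht habove le_rfl)
    (by rw [card_seg hZ])).symm

open Classical in
lemma lt_of_not_mem_seg {Z : Set ℕ} (hZ : Z.Infinite) {n z : ℕ} (hzZ : z ∈ Z)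
    (hz : z ∉ seg Z n) : ∀ a ∈ seg Z n, a < z := by
  intro a ha
  rw [mem_seg] at ha
  obtain ⟨i, hi, rfl⟩ := ha
  have hn : n ≤ Nat.count (· ∈ Z) z := by
    by_contra h
    push_neg at h
    exact hz (mem_seg.2 ⟨_, h, Nat.nth_count hzZ⟩)
  calc Nat.nth (· ∈ Z) i < Nat.nth (· ∈ Z) (Nat.count (· ∈ Z) z) :=
        Nat.nth_strictMono hZ (lt_of_lt_of_le hi hn)
    _ = z := Nat.nth_count hzZ

lemma sInf_eq_of {A : Set ℕ} {a : ℕ} (ha : a ∈ A) (h : ∀ b ∈ A, a ≤ b) : sInf A = a :=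
  le_antisymm (Nat.sInf_le ha) (h _ (Nat.sInf_mem ⟨a, ha⟩))

lemma sInf_mem_seg {Y : Set ℕ} (hY : Y.Infinite) (m : ℕ) : sInf Y ∈ seg Y (m + 1) :=
  mem_seg.2 ⟨0, Nat.succ_pos m, Nat.nth_zero⟩

lemma dropMin_infinite {Y : Set ℕ} (hY : Y.Infinite) : (dropMin Y).Infinite :=
  hY.diff (Set.finite_singleton _)

lemma seg_dropMin {Y : Set ℕ} (hY : Y.Infinite) (m : ℕ) :
    seg (dropMin Y) m = (seg Y (m + 1)).erase (sInf Y) := by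
  have hY' := dropMin_infinite hY
  have hsub : ↑((seg Y (m + 1)).erase (sInf Y)) ⊆ dropMin Y := by
    intro a ha
    rw [Finset.mem_coe, Finset.mem_erase] at ha
    exact ⟨seg_subset hY _ ha.2, ha.1⟩
  have habove : ∀ z ∈ dropMin Y, z ∉ (seg Y (m + 1)).erase (sInf Y) →
      ∀ a ∈ (seg Y (m + 1)).erase (sInf Y), a < z := by
    intro z hz hznot a ha
    have hzseg : z ∉ seg Y (m + 1) := by
      intro hmem
      exact hznot (Finset.mem_erase.2 ⟨hz.2, hmem⟩)
    exact lt_of_not_mem_seg hY hz.1 hzseg a (Finset.mem_erase.1 ha).2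
  have hcard : ((seg Y (m + 1)).erase (sInf Y)).card = m := by
    simp [Finset.card_erase_of_mem (sInf_mem_seg hY m), card_seg hY]
  calc seg (dropMin Y) m = seg (dropMin Y) ((seg Y (m+1)).erase (sInf Y)).card := by rw [hcard]
    _ = _ := seg_eq hY' hsub habove

lemma Cofin.infinite' {Y X : Set ℕ} (h : Cofin Y X) (hX : X.Infinite) : Y.Infinite := by
  rcases h with ⟨hsub, hfin⟩
  by_contra hfin'
  rw [Set.not_infinite] at hfin'
  refine hX (Set.Finite.subset (hfin'.union hfin) ?_)
  intro x hx
  by_cases hxY : x ∈ Y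
  · exact Or.inl hxY
  · exact Or.inr ⟨hx, hxY⟩

lemma Cofin.diff_singleton {Y X : Set ℕ} (h : Cofin Y X) (y : ℕ) :
    Cofin (Y \ {y}) X := by
  refine ⟨fun x hx => h.1 hx.1, Set.Finite.subset (h.2.union (Set.finite_singleton y)) ?_⟩
  intro x hx
  by_cases hxY : x ∈ Y
  · have : x = y := by
      by_contra hne
      exact hx.2 ⟨hxY, hne⟩
    exact Or.inr this
  · exact Or.inl ⟨hx.1, hxY⟩

lemma cofin_union_after {X : Set ℕ} (t : Finset ℕ) (ht : ↑t ⊆ X) :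
    Cofin (↑t ∪ after X t) X := by
  constructor
  · intro x hx
    rcases hx with hx | hx
    · exact ht hx
    · exact hx.1
  · refine Set.Finite.subset (Set.finite_Iio (t.sup id + 1)) ?_
    intro x hx
    have hxX : x ∈ X := hx.1
    have hnot : x ∉ ↑t ∪ after X t := hx.2
    have h1 : x ∉ after X t := fun h => hnot (Or.inr h)
    have h2 : ¬∀ m ∈ t, m < x := fun h => h1 ⟨hxX, h⟩
    push_neg at h2
    obtain ⟨m, hm, hmx⟩ := h2
    have : m ≤ t.sup id := Finset.le_sup (f := id) hm
    simp only [Set.mem_Iio]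
    omega

lemma after_infinite {X : Set ℕ} (hX : X.Infinite) (t : Finset ℕ) :
    (after X t).Infinite := by
  refine Set.Infinite.mono ?_ (hX.diff (Set.finite_Iio (t.sup id + 1)))
  intro x hx
  refine ⟨hx.1, fun m hm => ?_⟩
  have h1 : ¬ x < t.sup id + 1 := hx.2
  have : m ≤ t.sup id := Finset.le_sup (f := id) hm
  omega


open Classical in
open Fin.CommRing in
lemma lemB (f : Finset ℕ → Fin 3) (fbar : Set ℕ → Fin 3) (hEC : EvConst f)
    (hL : IsLimit f fbar) (X : Set ℕ) (hX : X.Infinite) (δ : Fin 3) (hδ : δ ≠ 0)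
    (H : ∀ Y, Cofin Y X → fbar (dropMin Y) = fbar Y + δ) : False := by
  classical
  -- Step 1: removing an arbitrary single element shifts the limit by δ
  have hrem : ∀ (n : ℕ) (Y : Set ℕ), Cofin Y X → ∀ y ∈ Y,
      (Set.Iio y ∩ Y).ncard = n → fbar (Y \ {y}) = fbar Y + δ := by
    intro n
    induction n with
    | zero =>
      intro Y hY y hyY hcard
      have hfin : (Set.Iio y ∩ Y).Finite := (Set.finite_Iio y).inter_of_left Y
      have hempty : Set.Iio y ∩ Y = ∅ := (Set.ncard_eq_zero hfin).1 hcard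
      have hinf : sInf Y = y := by
        refine sInf_eq_of hyY ?_
        intro b hb
        by_contra hlt
        push_neg at hlt
        have : b ∈ Set.Iio y ∩ Y := ⟨hlt, hb⟩
        rw [hempty] at this
        exact this
      have := H Y hY
      rw [dropMin, hinf] at this
      exact this
    | succ n ih =>
      intro Y hY y hyY hcard
      have hYne : Y.Nonempty := ⟨y, hyY⟩
      have hsmem : sInf Y ∈ Y := Nat.sInf_mem hYne
      have hfin : (Set.Iio y ∩ Y).Finite := (Set.finite_Iio y).inter_of_left Y
      have hne : (Set.Iio y ∩ Y).Nonempty := by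
        rw [Set.nonempty_iff_ne_empty]
        intro hemp
        rw [hemp, Set.ncard_empty] at hcard
        omega
      obtain ⟨z, hz⟩ := hne
      have hinf_lt : sInf Y < y := lt_of_le_of_lt (Nat.sInf_le hz.2) hz.1
      have hyne : y ≠ sInf Y := by omega
      have hY' : Cofin (Y \ {sInf Y}) X := hY.diff_singleton _
      have hyY' : y ∈ Y \ {sInf Y} := ⟨hyY, by simp [hyne]⟩
      have hseteq : Set.Iio y ∩ (Y \ ({sInf Y} : Set ℕ))
          = (Set.Iio y ∩ Y) \ {sInf Y} := by
        ext w
        simp only [Set.mem_inter_iff, Set.mem_diff, Set.mem_singleton_iff, Set.mem_Iio]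
        tauto
      have hcard' : (Set.Iio y ∩ (Y \ ({sInf Y} : Set ℕ))).ncard = n := by
        have hmem : sInf Y ∈ Set.Iio y ∩ Y := ⟨hinf_lt, hsmem⟩
        rw [hseteq, Set.ncard_diff_singleton_of_mem hmem, hcard]
        omega
      have hIH := ih (Y \ {sInf Y}) hY' y hyY' hcard'
      have h1 : fbar (Y \ {sInf Y}) = fbar Y + δ := H Y hY
      have hsinf_eq : sInf (Y \ ({y} : Set ℕ)) = sInf Y := by
        refine sInf_eq_of ⟨hsmem, by simp; omega⟩ ?_
        intro b hb
        exact Nat.sInf_le hb.1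
      have h2 := H (Y \ {y}) (hY.diff_singleton y)
      rw [dropMin, hsinf_eq] at h2
      have hcomm : (Y \ ({y} : Set ℕ)) \ {sInf Y} = (Y \ {sInf Y}) \ {y} :=
        Set.diff_diff_comm
      rw [hcomm] at h2
      -- h2 : fbar ((Y \ {sInf Y}) \ {y}) = fbar (Y \ {y}) + δ
      -- hIH : fbar ((Y \ {sInf Y}) \ {y}) = fbar (Y \ {sInf Y}) + δ
      have : fbar (Y \ {y}) + δ = (fbar Y + δ) + δ := by
        rw [← h2, hIH, h1]
      exact add_right_cancel this
  have hrem' : ∀ Y, Cofin Y X → ∀ y ∈ Y, fbar (Y \ {y}) = fbar Y + δ :=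
    fun Y hY y hy => hrem _ Y hY y hy rfl
  -- Step 2: extension step
  have hstep : ∀ (t : Finset ℕ) (v : Fin 3), ∃ t' : Finset ℕ,
      (↑t ⊆ X ∧ fbar (↑t ∪ after X t) = v) →
      (↑t' ⊆ X ∧ fbar (↑t' ∪ after X t') = v + δ ∧ f t' = v + δ ∧ t ⊆ t' ∧
        t.card < t'.card ∧ ∀ a ∈ t', a ∉ t → ∀ b ∈ t, b < a) := by
    intro t v
    by_cases h : ↑t ⊆ X ∧ fbar (↑t ∪ after X t) = v
    · obtain ⟨htX, hval⟩ := h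
      have hYcof : Cofin (↑t ∪ after X t) X := cofin_union_after t htX
      have hYinf : (↑t ∪ after X t : Set ℕ).Infinite := hYcof.infinite' hX
      have hafter_ne : (after X t).Nonempty := (after_infinite hX t).nonempty
      set y := sInf (after X t) with hy
      have hymem : y ∈ after X t := Nat.sInf_mem hafter_ne
      have hyY : y ∈ (↑t ∪ after X t : Set ℕ) := Or.inr hymem
      set Y'' : Set ℕ := (↑t ∪ after X t) \ {y} with hY''def
      have hY''cof : Cofin Y'' X := hYcof.diff_singleton y
      have hY''inf : Y''.Infinite := hY''cof.infinite' hX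
      have hY''val : fbar Y'' = v + δ := by
        rw [hrem' _ hYcof y hyY, hval]
      obtain ⟨N, hN⟩ := hL Y'' hY''inf
      set n := max N (t.card + 1) with hn
      set t' := seg Y'' n with ht'def
      have htY'' : ↑t ⊆ Y'' := by
        intro a ha
        refine ⟨Or.inl ha, ?_⟩
        simp only [Set.mem_singleton_iff]
        intro haeq
        have := hymem.2 a ha
        omega
      have habove'' : ∀ z ∈ Y'', z ∉ t → ∀ a ∈ t, a < z := by
        intro z hz hzt a ha
        rcases hz.1 with hzt' | hzaf
        · exact absurd hzt' hzt
        · exact hzaf.2 a ha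
      have ht'X : ↑t' ⊆ X := fun a ha => hY''cof.1 (seg_subset hY''inf n ha)
      have htt' : t ⊆ t' := subset_seg hY''inf htY'' habove''
        (le_trans (by omega) (le_max_right N (t.card + 1)))
      have hcard' : t'.card = n := card_seg hY''inf n
      have hcardlt : t.card < t'.card := by
        rw [hcard']; have := le_max_right N (t.card + 1); omega
      have hft' : f t' = v + δ := by
        rw [← hY''val]; exact hN n (le_max_left _ _)
      have hend : ∀ a ∈ t', a ∉ t → ∀ b ∈ t, b < a := fun a ha hat b hb =>
        habove'' a (seg_subset hY''inf n ha) hat b hb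
      obtain ⟨a₀, ha₀t', ha₀t⟩ : ∃ a ∈ t', a ∉ t := by
        by_contra hcon
        push_neg at hcon
        have : t' ⊆ t := hcon
        have := Finset.card_le_card this
        omega
      have ha₀Y'' : a₀ ∈ Y'' := seg_subset hY''inf n ha₀t'
      have hy_lt_a₀ : y < a₀ := by
        have haf : a₀ ∈ after X t := by
          rcases ha₀Y''.1 with h' | h'
          · exact absurd h' ha₀t
          · exact h'
        have hle : y ≤ a₀ := Nat.sInf_le haf
        have hne : a₀ ≠ y := by
          intro he
          exact ha₀Y''.2 (by simp [he])
        omega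
      have hYeq : ↑t' ∪ after X t' = Y'' := by
        apply Set.Subset.antisymm
        · intro z hz
          rcases hz with hz | hz
          · exact seg_subset hY''inf n hz
          · have hzX : z ∈ X := hz.1
            have hzaf : z ∈ after X t := ⟨hzX, fun m hm => hz.2 m (htt' hm)⟩
            have hza₀ : a₀ < z := hz.2 a₀ ha₀t'
            refine ⟨Or.inr hzaf, ?_⟩
            simp only [Set.mem_singleton_iff]
            omega
        · intro w hw
          by_cases hwt' : w ∈ t'
          · exact Or.inl hwt'
          · exact Or.inr ⟨hY''cof.1 hw, fun m hm => lt_of_not_mem_seg hY''inf hw hwt' m hm⟩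
      have hfYof : fbar (↑t' ∪ after X t') = v + δ := by rw [hYeq]; exact hY''val
      exact ⟨t', fun _ => ⟨ht'X, hfYof, hft', htt', hcardlt, hend⟩⟩
    · exact ⟨∅, fun h' => absurd h' h⟩
  choose F hF using hstep
  set c₀ := fbar X with hc₀
  obtain ⟨T, hT0, hTsucc⟩ : ∃ T : ℕ → Finset ℕ, T 0 = ∅ ∧
      ∀ k, T (k + 1) = F (T k) (c₀ + (k : Fin 3) * δ) :=
    ⟨fun k => Nat.rec ∅ (fun k tk => F tk (c₀ + (k : Fin 3) * δ)) k, rfl, fun _ => rfl⟩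
  have hYof0 : ((↑(∅ : Finset ℕ) ∪ after X ∅ : Set ℕ)) = X := by
    ext x; simp [after]
  have hINV : ∀ k, (↑(T k) : Set ℕ) ⊆ X ∧ fbar ((↑(T k) : Set ℕ) ∪ after X (T k)) = c₀ + (k : Fin 3) * δ := by
    intro k
    induction k with
    | zero =>
      refine ⟨?_, ?_⟩
      · rw [hT0]; simp
      · rw [hT0, hYof0]; simp [hc₀]
    | succ k ih =>
      have h := hF (T k) (c₀ + (k : Fin 3) * δ) ih
      rw [hTsucc k]
      refine ⟨h.1, ?_⟩
      rw [h.2.1]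
      push_cast
      ring
  have hprops : ∀ k, f (T (k + 1)) = c₀ + (k : Fin 3) * δ + δ ∧ T k ⊆ T (k + 1) ∧
      (T k).card < (T (k + 1)).card ∧ ∀ a ∈ T (k + 1), a ∉ T k → ∀ b ∈ T k, b < a := by
    intro k
    have h := hF (T k) (c₀ + (k : Fin 3) * δ) (hINV k)
    rw [hTsucc k]
    exact ⟨h.2.2.1, h.2.2.2.1, h.2.2.2.2.1, h.2.2.2.2.2⟩
  have hmono : ∀ j k, j ≤ k → T j ⊆ T k := by
    intro j k hjk
    induction hjk with
    | refl => exact Finset.Subset.refl _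
    | step h ih => exact ih.trans (hprops _).2.1
  have hcard_ge : ∀ k, k ≤ (T k).card := by
    intro k
    induction k with
    | zero => omega
    | succ k ih =>
      have := (hprops k).2.2.1
      omega
  have hglobal : ∀ k m, k ≤ m → ∀ z ∈ T m, z ∉ T k → ∀ a ∈ T k, a < z := by
    intro k m hkm
    induction hkm with
    | refl => intro z hz hznot a _; exact absurd hz hznot
    | @step m h ih =>
      intro z hz hznot a ha
      by_cases hzm : z ∈ T m
      · exact ih z hzm hznot a ha
      · exact (hprops m).2.2.2 z hz hzm a (hmono k m h ha)
  set Z : Set ℕ := ⋃ k, (↑(T k) : Set ℕ) with hZdef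
  have hTsubZ : ∀ k, ↑(T k) ⊆ Z := fun k => Set.subset_iUnion (fun k => (↑(T k) : Set ℕ)) k
  have hZinf : Z.Infinite := by
    intro hfin
    have hsub : ∀ k, T k ⊆ hfin.toFinset := by
      intro k a ha
      rw [Set.Finite.mem_toFinset]
      exact hTsubZ k ha
    have h1 := hcard_ge (hfin.toFinset.card + 1)
    have h2 := Finset.card_le_card (hsub (hfin.toFinset.card + 1))
    omega
  have hsegZ : ∀ k, seg Z (T k).card = T k := by
    intro k
    refine seg_eq hZinf (hTsubZ k) ?_
    intro z hz hzt a ha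
    obtain ⟨m, hm⟩ : ∃ m, z ∈ T m := by
      simpa [hZdef] using hz
    rcases le_or_gt m k with h' | h'
    · exact absurd (hmono m k h' hm) hzt
    · exact hglobal k m (le_of_lt h') z hm hzt a ha
  obtain ⟨N, hNZ⟩ := hEC Z hZinf
  have key : ∀ k, f (seg Z (T (k + 1)).card) = c₀ + (k : Fin 3) * δ + δ := by
    intro k
    rw [hsegZ]
    exact (hprops k).1
  have h1 : (T (N + 2)).card > N := by have := hcard_ge (N + 2); omega
  have h2 : (T (N + 3)).card > N := by have := hcard_ge (N + 3); omega
  have e1 := hNZ _ h1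
  have e2 := hNZ _ h2
  have e1' : c₀ + ((N + 1 : ℕ) : Fin 3) * δ + δ = f (seg Z N) := by
    rw [← key (N + 1)]; exact e1
  have e2' : c₀ + ((N + 2 : ℕ) : Fin 3) * δ + δ = f (seg Z N) := by
    rw [← key (N + 2)]; exact e2
  have heq : c₀ + ((N + 1 : ℕ) : Fin 3) * δ + δ = c₀ + ((N + 2 : ℕ) : Fin 3) * δ + δ :=
    e1'.trans e2'.symm
  apply hδ
  push_cast at heq
  linear_combination -heq


lemma evconst_of_isLimit {Q : Type*} (g : Finset ℕ → Q) (gbar : Set ℕ → Q)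
    (h : IsLimit g gbar) : EvConst g := by
  intro Z hZ
  obtain ⟨N, hN⟩ := h Z hZ
  exact ⟨N, fun n hn => (hN n (by omega)).trans (hN N le_rfl).symm⟩

lemma sInf_coe_seg {Z : Set ℕ} (hZ : Z.Infinite) (m : ℕ) :
    sInf (↑(seg Z (m + 1)) : Set ℕ) = sInf Z := by
  refine sInf_eq_of (a := sInf Z) (sInf_mem_seg hZ m) ?_
  intro b hb
  exact Nat.sInf_le (seg_subset hZ (m + 1) hb)

lemma auxLimit (f : Finset ℕ → Fin 3) (fbar : Set ℕ → Fin 3) (hIL : IsLimit f fbar) :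
    IsLimit (fun s => if f (s.erase (sInf (↑s : Set ℕ))) = f s + 1 then (1 : Fin 2) else 0)
      (fun Z => if fbar (dropMin Z) = fbar Z + 1 then (1 : Fin 2) else 0) := by
  intro Z hZ
  have hZ' := dropMin_infinite hZ
  obtain ⟨N₁, h₁⟩ := hIL Z hZ
  obtain ⟨N₂, h₂⟩ := hIL (dropMin Z) hZ'
  refine ⟨max (N₁ + 1) (N₂ + 1), fun n hn => ?_⟩
  have hn1 : n ≥ N₁ + 1 := le_trans (le_max_left _ _) hn
  have hn2 : n ≥ N₂ + 1 := le_trans (le_max_right _ _) hn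
  obtain ⟨m, rfl⟩ : ∃ m, n = m + 1 := ⟨n - 1, by omega⟩
  show (if f ((seg Z (m + 1)).erase (sInf (↑(seg Z (m + 1)) : Set ℕ)))
      = f (seg Z (m + 1)) + 1 then (1 : Fin 2) else 0) = _
  have e1 : (seg Z (m + 1)).erase (sInf (↑(seg Z (m + 1)) : Set ℕ)) = seg (dropMin Z) m := by
    rw [sInf_coe_seg hZ, ← seg_dropMin hZ]
  rw [e1, h₂ m (by omega), h₁ (m + 1) (by omega)]


theorem stmt6
    (ramsey : ∀ (g : Finset ℕ → Fin 2) (gbar : Set ℕ → Fin 2),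
      EvConst g → IsLimit g gbar →
      ∃ X : Set ℕ, X.Infinite ∧
        ∀ Y₁ Y₂ : Set ℕ, Cofin Y₁ X → Cofin Y₂ X → gbar Y₁ = gbar Y₂) :
    ∀ (f : Finset ℕ → Fin 3) (fbar : Set ℕ → Fin 3),
      EvConst f → IsLimit f fbar →
      ∃ X : Set ℕ, X.Infinite ∧ fbar X = fbar (dropMin X) := by
  intro f fbar hEC hIL
  have hgIL := auxLimit f fbar hIL
  have hgEC := evconst_of_isLimit _ _ hgIL
  obtain ⟨X, hXinf, hhom⟩ := ramsey _ _ hgEC hgIL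
  have hXcof : Cofin X X := ⟨Set.Subset.refl X, by simp⟩
  by_cases hgood : ∃ Y, Cofin Y X ∧ fbar (dropMin Y) = fbar Y
  · obtain ⟨Y, hYc, hYe⟩ := hgood
    exact ⟨Y, hYc.infinite' hXinf, hYe.symm⟩
  · push_neg at hgood
    exfalso
    have hconst : ∀ Y, Cofin Y X →
        (if fbar (dropMin Y) = fbar Y + 1 then (1 : Fin 2) else 0)
          = (if fbar (dropMin X) = fbar X + 1 then (1 : Fin 2) else 0) :=
      fun Y hY => hhom Y X hY hXcof
    have fin3 : ∀ a b : Fin 3, a ≠ b → a ≠ b + 1 → a = b + 2 := by decide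
    by_cases hb : fbar (dropMin X) = fbar X + 1
    · have H : ∀ Y, Cofin Y X → fbar (dropMin Y) = fbar Y + 1 := by
        intro Y hY
        have h := hconst Y hY
        rw [if_pos hb] at h
        by_contra hc
        rw [if_neg hc] at h
        exact absurd h (by decide)
      exact lemB f fbar hEC hIL X hXinf 1 (by decide) H
    · have H : ∀ Y, Cofin Y X → fbar (dropMin Y) = fbar Y + 2 := by
        intro Y hY
        have h := hconst Y hY
        rw [if_neg hb] at h
        have h2 : fbar (dropMin Y) ≠ fbar Y + 1 := by
          intro hc
          rw [if_pos hc] at h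
          exact absurd h (by decide)
        exact fin3 _ _ (hgood Y hY) h2
      exact lemB f fbar hEC hIL X hXinf 2 (by decide) H
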